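/- Let f: ℝⁿ → ℝ be differentiable at x ∈ ℝⁿ, let B > 0, and let g be a random vector in ℝⁿ with E[g] = ∇f(x) and E[‖g‖₂²] ≤ B. Let Q be a random map on ℝⁿ whose randomness is independent of g and such that, conditionally on g = w for any nonzero w, Q(w) is distributed as the stochastic quantization Q_s(w) (and Q(0) = 0). Then E[Q(g)] = ∇f(x) and E[‖Q(g) − ∇f(x)‖₂²] ≤ (1 + min(n/s², √n/s)) · B. In particular, Q(g) is again a stochastic gradient for f at x. -/

import Mathlib

open MeasureTheory ProbabilityTheory

/-- `Qv` is (a realization on the probability space `(Ω, μ)` of) the stochastic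
quantization `Q_s(v)` of the nonzero vector `v ∈ ℝⁿ` with `s` quantization levels:
`Q_s(v)_i = ‖v‖₂ · sgn(vᵢ) · ξᵢ`, where the `ξᵢ` are independent, and, with
`aᵢ = |vᵢ|/‖v‖₂` and `ℓᵢ ∈ {0, …, s−1}` such that `aᵢ ∈ [ℓᵢ/s, (ℓᵢ+1)/s]`, `ξᵢ` takes
the value `(ℓᵢ+1)/s` with probability `pᵢ = aᵢ·s − ℓᵢ` and `ℓᵢ/s` with probability
`1 − pᵢ`. -/
def IsStochQuant {n : ℕ} (s : ℕ) {Ω : Type*} [MeasurableSpace Ω] (μ : Measure Ω)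
    (v : EuclideanSpace ℝ (Fin n)) (Qv : Ω → EuclideanSpace ℝ (Fin n)) : Prop :=
  ∃ (ξ : Fin n → Ω → ℝ) (ℓ : Fin n → ℕ),
    (∀ i, Measurable (ξ i)) ∧
    iIndepFun ξ μ ∧
    (∀ i, ℓ i ≤ s - 1) ∧
    (∀ i, (ℓ i : ℝ) / s ≤ |v i| / ‖v‖ ∧ |v i| / ‖v‖ ≤ ((ℓ i : ℝ) + 1) / s) ∧
    (∀ i, μ {ω | ξ i ω = ((ℓ i : ℝ) + 1) / s} =
        ENNReal.ofReal (|v i| / ‖v‖ * s - ℓ i)) ∧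
    (∀ i, μ {ω | ξ i ω = (ℓ i : ℝ) / s} =
        1 - ENNReal.ofReal (|v i| / ‖v‖ * s - ℓ i)) ∧
    (∀ ω i, Qv ω i = ‖v‖ * (if 0 ≤ v i then (1 : ℝ) else -1) * ξ i ω)

section aux
variable {Ω' : Type*} [MeasurableSpace Ω'] {μ' : Measure Ω'} [IsProbabilityMeasure μ']

lemma two_point_ae {ξ : Ω' → ℝ} {lo hi p : ℝ} (hmeas : Measurable ξ) (hne : lo ≠ hi)
    (hp1 : p ≤ 1)
    (hA : μ' {ω | ξ ω = hi} = ENNReal.ofReal p)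
    (hB : μ' {ω | ξ ω = lo} = 1 - ENNReal.ofReal p) :
    ∀ᵐ ω ∂μ', ξ ω = hi ∨ ξ ω = lo := by
  have hAm : MeasurableSet {ω | ξ ω = hi} := hmeas (measurableSet_singleton hi)
  have hBm : MeasurableSet {ω | ξ ω = lo} := hmeas (measurableSet_singleton lo)
  have hdisj : Disjoint {ω | ξ ω = hi} {ω | ξ ω = lo} := by
    rw [Set.disjoint_left]
    rintro ω (h1 : ξ ω = hi) (h2 : ξ ω = lo)
    exact hne (h2 ▸ h1)
  have hunion : μ' ({ω | ξ ω = hi} ∪ {ω | ξ ω = lo}) = 1 := by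
    rw [measure_union hdisj hBm, hA, hB,
      add_tsub_cancel_of_le (ENNReal.ofReal_le_one.2 hp1)]
  have := (prob_compl_eq_zero_iff (hAm.union hBm)).2 hunion
  rw [ae_iff]
  convert this using 2
  ext ω; simp

lemma two_point_integral_if {ξ : Ω' → ℝ} {hi p : ℝ} (hmeas : Measurable ξ)
    (hp0 : 0 ≤ p)
    (hA : μ' {ω | ξ ω = hi} = ENNReal.ofReal p) (c d : ℝ) :
    ∫ ω, (if ξ ω = hi then c else d) ∂μ' = c * p + d * (1 - p) := by
  have hAm : MeasurableSet {ω | ξ ω = hi} := hmeas (measurableSet_singleton hi)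
  have heq : (fun ω => if ξ ω = hi then c else d)
      = fun ω => Set.indicator {ω | ξ ω = hi} (fun _ => c - d) ω + d := by
    ext ω
    by_cases h : ξ ω = hi <;> simp [Set.indicator, h]
  rw [heq, integral_add ((integrable_const (c - d)).indicator hAm) (integrable_const d),
    integral_indicator_const _ hAm, integral_const, measureReal_def, hA, ENNReal.toReal_ofReal hp0]
  simp [measure_univ]
  ring

lemma two_point_integrable_if {ξ : Ω' → ℝ} {hi : ℝ} (hmeas : Measurable ξ) (c d : ℝ) :
    Integrable (fun ω => if ξ ω = hi then c else d) μ' := by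
  have hAm : MeasurableSet {ω | ξ ω = hi} := hmeas (measurableSet_singleton hi)
  have heq : (fun ω => if ξ ω = hi then c else d)
      = fun ω => Set.indicator {ω | ξ ω = hi} (fun _ => c - d) ω + d := by
    ext ω
    by_cases h : ξ ω = hi <;> simp [Set.indicator, h]
  rw [heq]
  exact ((integrable_const (c - d)).indicator hAm).add (integrable_const d)

lemma stochQuant_moments {n s : ℕ} (hs : 1 ≤ s)
    {w : EuclideanSpace ℝ (Fin n)} (hw : w ≠ 0)
    {Qw : Ω' → EuclideanSpace ℝ (Fin n)} (h : IsStochQuant s μ' w Qw) :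
    Measurable Qw ∧
    (∀ᵐ ω' ∂μ', ‖Qw ω'‖ ≤ Real.sqrt n * ‖w‖) ∧
    Integrable Qw μ' ∧ (∫ ω', Qw ω' ∂μ' = w) ∧
    (∫ ω', ‖Qw ω'‖ ^ 2 ∂μ' ≤ (1 + min ((n : ℝ) / s ^ 2) (Real.sqrt n / s)) * ‖w‖ ^ 2) := by
  obtain ⟨ξ, ℓ, hξm, -, hℓ, hbr, hA, hB, hQ⟩ := h
  have hs0 : (0 : ℝ) < s := by positivity
  have hw0 : (0 : ℝ) < ‖w‖ := norm_pos_iff.2 hw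
  set a : Fin n → ℝ := fun i => |w i| / ‖w‖ with ha
  set P : Fin n → ℝ := fun i => |w i| / ‖w‖ * s - ℓ i with hP
  have hp0 : ∀ i, 0 ≤ P i := by
    intro i
    have := (hbr i).1
    rw [div_le_div_iff₀ hs0 hw0] at this
    simp only [hP]
    rw [sub_nonneg, div_mul_eq_mul_div, le_div_iff₀ hw0]
    linarith
  have hp1 : ∀ i, P i ≤ 1 := by
    intro i
    have := (hbr i).2
    rw [div_le_div_iff₀ hw0 hs0] at this
    simp only [hP]
    rw [sub_le_iff_le_add, div_mul_eq_mul_div, div_le_iff₀ hw0]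
    linarith
  have hne : ∀ i, ((ℓ i : ℝ)) / s ≠ ((ℓ i : ℝ) + 1) / s := by
    intro i hEq
    rw [div_eq_div_iff hs0.ne' hs0.ne'] at hEq
    nlinarith
  have hae : ∀ i, ∀ᵐ ω ∂μ', ξ i ω = ((ℓ i : ℝ) + 1) / s ∨ ξ i ω = (ℓ i : ℝ) / s :=
    fun i => two_point_ae (hξm i) (hne i) (hp1 i) (hA i) (hB i)
  have hifeq : ∀ i (c d : ℝ), (fun ω => (if ξ i ω = ((ℓ i : ℝ) + 1) / s then c else d))
      =ᵐ[μ'] (fun ω => (if ξ i ω = ((ℓ i : ℝ) + 1) / s then c else d)) := fun _ _ _ => .rfl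
  -- expectation of ξ i
  have hξae : ∀ i, ξ i =ᵐ[μ']
      fun ω => if ξ i ω = ((ℓ i : ℝ) + 1) / s then ((ℓ i : ℝ) + 1) / s else (ℓ i : ℝ) / s := by
    intro i
    filter_upwards [hae i] with ω hω
    rcases hω with h1 | h1
    · rw [if_pos h1, h1]
    · rw [h1, if_neg (hne i)]
  have hξsqae : ∀ i, (fun ω => (ξ i ω) ^ 2) =ᵐ[μ']
      fun ω => if ξ i ω = ((ℓ i : ℝ) + 1) / s then (((ℓ i : ℝ) + 1) / s) ^ 2
        else ((ℓ i : ℝ) / s) ^ 2 := by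
    intro i
    filter_upwards [hae i] with ω hω
    rcases hω with h1 | h1
    · rw [if_pos h1, h1]
    · rw [h1, if_neg (hne i)]
  have hξint : ∀ i, Integrable (ξ i) μ' :=
    fun i => (two_point_integrable_if (hξm i) _ _).congr (hξae i).symm
  have hξsqint : ∀ i, Integrable (fun ω => (ξ i ω) ^ 2) μ' :=
    fun i => (two_point_integrable_if (hξm i) _ _).congr (hξsqae i).symm
  have hEξ : ∀ i, ∫ ω, ξ i ω ∂μ' = a i := by
    intro i
    rw [integral_congr_ae (hξae i),
      two_point_integral_if (hξm i) (hp0 i) (hA i)]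
    simp only [ha, hP]
    field_simp
    ring
  have hEξsq : ∀ i, ∫ ω, (ξ i ω) ^ 2 ∂μ' = a i ^ 2 + P i * (1 - P i) / s ^ 2 := by
    intro i
    rw [integral_congr_ae (hξsqae i),
      two_point_integral_if (hξm i) (hp0 i) (hA i)]
    simp only [ha, hP]
    field_simp
    ring
  -- measurability
  have hQm : Measurable Qw := by
    refine (WithLp.measurable_toLp 2 (Fin n → ℝ)).comp (f := fun ω => WithLp.ofLp (Qw ω)) ?_
    apply measurable_pi_iff.2
    intro i
    have : (fun ω' => Qw ω' i)
        = fun ω' => ‖w‖ * (if 0 ≤ w i then (1 : ℝ) else -1) * ξ i ω' := by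
      ext ω'; exact hQ ω' i
    rw [this]
    exact (hξm i).const_mul _
  -- norm squared formula
  have hQsq : ∀ ω', ‖Qw ω'‖ ^ 2 = ‖w‖ ^ 2 * ∑ i, (ξ i ω') ^ 2 := by
    intro ω'
    rw [EuclideanSpace.norm_eq, Real.sq_sqrt (by positivity), Finset.mul_sum]
    refine Finset.sum_congr rfl fun i _ => ?_
    rw [hQ ω' i, Real.norm_eq_abs, sq_abs]
    by_cases hwi : 0 ≤ w i <;> simp [hwi] <;> ring
  -- a.e. bound
  have hξbd : ∀ᵐ ω' ∂μ', ∀ i, |ξ i ω'| ≤ 1 := by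
    rw [ae_all_iff]
    intro i
    filter_upwards [hae i] with ω hω
    have hl1 : ℓ i + 1 ≤ s := by have := hℓ i; omega
    have h1 : ((ℓ i : ℝ) + 1) / s ≤ 1 := by
      rw [div_le_one hs0]; exact_mod_cast hl1
    have h0 : (0 : ℝ) ≤ (ℓ i : ℝ) / s := by positivity
    have h0' : (0 : ℝ) ≤ ((ℓ i : ℝ) + 1) / s := by positivity
    have h2 : (ℓ i : ℝ) / s ≤ 1 := by
      rw [div_le_one hs0]; exact_mod_cast (by omega : ℓ i ≤ s)
    rcases hω with h3 | h3 <;> rw [h3, abs_le] <;>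
      exact ⟨by linarith, by assumption⟩
  -- a.e. norm bound
  have hbd : ∀ᵐ ω' ∂μ', ‖Qw ω'‖ ≤ Real.sqrt n * ‖w‖ := by
    filter_upwards [hξbd] with ω' hb
    have hsle : ∑ i, (ξ i ω') ^ 2 ≤ (n : ℝ) := by
      calc ∑ i, (ξ i ω') ^ 2 ≤ ∑ _i : Fin n, (1 : ℝ) := by
            refine Finset.sum_le_sum fun i _ => ?_
            nlinarith [hb i, abs_nonneg (ξ i ω'), sq_abs (ξ i ω')]
        _ = n := by simp
    have h2 : ‖Qw ω'‖ ^ 2 ≤ (Real.sqrt n * ‖w‖) ^ 2 := by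
      rw [hQsq ω', mul_pow, Real.sq_sqrt (Nat.cast_nonneg n)]
      nlinarith [sq_nonneg ‖w‖]
    calc ‖Qw ω'‖ = Real.sqrt (‖Qw ω'‖ ^ 2) := (Real.sqrt_sq (norm_nonneg _)).symm
      _ ≤ Real.sqrt ((Real.sqrt n * ‖w‖) ^ 2) := Real.sqrt_le_sqrt h2
      _ = Real.sqrt n * ‖w‖ := Real.sqrt_sq (by positivity)
  have hQint : Integrable Qw μ' :=
    Integrable.mono' (integrable_const (Real.sqrt n * ‖w‖)) hQm.aestronglyMeasurable hbd
  -- mean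
  have hmean : ∫ ω', Qw ω' ∂μ' = w := by
    ext i
    have h1 := (EuclideanSpace.proj (𝕜 := ℝ) i).integral_comp_comm hQint
    simp only [PiLp.proj_apply] at h1
    rw [← h1]
    simp only [hQ]
    rw [integral_const_mul, hEξ i]
    simp only [ha]
    rcases le_or_gt 0 (w i) with hwi | hwi
    · rw [if_pos hwi, abs_of_nonneg hwi]
      field_simp
    · rw [if_neg (not_le.2 hwi), abs_of_neg hwi]
      field_simp
  -- second moment
  have hsum_a : ∑ i, a i ^ 2 = 1 := by
    have hw2 : ∑ i, (w i) ^ 2 = ‖w‖ ^ 2 := by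
      rw [EuclideanSpace.norm_eq, Real.sq_sqrt (by positivity)]
      exact Finset.sum_congr rfl fun i _ => by rw [Real.norm_eq_abs, sq_abs]
    simp only [ha, div_pow, sq_abs, ← Finset.sum_div, hw2]
    field_simp
  have hsumP_n : ∑ i, P i * (1 - P i) ≤ (n : ℝ) := by
    calc ∑ i, P i * (1 - P i) ≤ ∑ _i : Fin n, (1 : ℝ) :=
          Finset.sum_le_sum fun i _ => by nlinarith [hp0 i, hp1 i]
      _ = n := by simp
  have hsum_a_le : ∑ i, a i ≤ Real.sqrt n := by
    rw [Real.le_sqrt (Finset.sum_nonneg fun i _ => by positivity) (Nat.cast_nonneg n)]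
    calc (∑ i, a i) ^ 2 ≤ (Finset.univ.card : ℝ) * ∑ i, a i ^ 2 :=
          sq_sum_le_card_mul_sum_sq
      _ = n := by rw [hsum_a]; simp
  have hsumP_sqrt : ∑ i, P i * (1 - P i) ≤ Real.sqrt n * s := by
    calc ∑ i, P i * (1 - P i) ≤ ∑ i, a i * s := by
          refine Finset.sum_le_sum fun i _ => ?_
          have h1 : P i * (1 - P i) ≤ P i := by nlinarith [hp0 i, hp1 i]
          have h2 : P i ≤ a i * s := by
            simp only [hP, ha]
            have : (0 : ℝ) ≤ (ℓ i : ℝ) := Nat.cast_nonneg _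
            linarith
          linarith
      _ = (∑ i, a i) * s := by rw [Finset.sum_mul]
      _ ≤ Real.sqrt n * s := mul_le_mul_of_nonneg_right hsum_a_le hs0.le
  have hEsq : ∫ ω', ‖Qw ω'‖ ^ 2 ∂μ'
      = ‖w‖ ^ 2 * (1 + (∑ i, P i * (1 - P i)) / s ^ 2) := by
    simp only [hQsq]
    rw [integral_const_mul, integral_finset_sum _ (fun i _ => hξsqint i)]
    congr 1
    calc ∑ i, ∫ ω', (ξ i ω') ^ 2 ∂μ'
        = ∑ i, (a i ^ 2 + P i * (1 - P i) / s ^ 2) :=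
          Finset.sum_congr rfl fun i _ => hEξsq i
      _ = ∑ i, a i ^ 2 + (∑ i, P i * (1 - P i)) / s ^ 2 := by
          rw [Finset.sum_add_distrib, Finset.sum_div]
      _ = 1 + (∑ i, P i * (1 - P i)) / s ^ 2 := by rw [hsum_a]
  refine ⟨hQm, hbd, hQint, hmean, ?_⟩
  rw [hEsq]
  have hT : (∑ i, P i * (1 - P i)) / s ^ 2 ≤ min ((n : ℝ) / s ^ 2) (Real.sqrt n / s) := by
    refine le_min ?_ ?_
    · gcongr
    · have hrw : Real.sqrt n / s = (Real.sqrt n * s) / s ^ 2 := by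
        field_simp
      rw [hrw]
      gcongr
  nlinarith [hT, sq_nonneg ‖w‖]

end aux

/-- **Quantization of a stochastic gradient is a stochastic gradient.**
If `g` is a stochastic gradient for `f` at `x` with second moment bound `B`, and
`Q` applies the stochastic quantization `Q_s` with fresh randomness independent of
`g` (modelled by the product space `Ω × Ω'`), then `Q(g)` has mean `∇f(x)` and
variance at most `(1 + min(n/s², √n/s)) · B`; in particular it is again a
stochastic gradient for `f` at `x`. -/
theorem stochQuant_of_stochastic_gradient {n : ℕ} (hn : 1 ≤ n) (s : ℕ) (hs : 1 ≤ s)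
    (B : ℝ) (hB : 0 < B)
    (f : EuclideanSpace ℝ (Fin n) → ℝ) (x : EuclideanSpace ℝ (Fin n))
    (hf : DifferentiableAt ℝ f x)
    {Ω Ω' : Type*} [MeasurableSpace Ω] [MeasurableSpace Ω']
    (μ : Measure Ω) [IsProbabilityMeasure μ] (μ' : Measure Ω') [IsProbabilityMeasure μ']
    (g : Ω → EuclideanSpace ℝ (Fin n)) (hgmeas : Measurable g) (hgL2 : MemLp g 2 μ)
    (hgmean : ∫ ω, g ω ∂μ = gradient f x)
    (hgmom : ∫ ω, ‖g ω‖ ^ 2 ∂μ ≤ B)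
    (Q : EuclideanSpace ℝ (Fin n) → Ω' → EuclideanSpace ℝ (Fin n))
    (hQmeas : Measurable (fun p : Ω × Ω' => Q (g p.1) p.2))
    (hQzero : ∀ ω', Q 0 ω' = 0)
    (hQdist : ∀ w : EuclideanSpace ℝ (Fin n), w ≠ 0 → IsStochQuant s μ' w (Q w)) :
    (∫ p, Q (g p.1) p.2 ∂(μ.prod μ') = gradient f x) ∧
    (∫ p, ‖Q (g p.1) p.2 - gradient f x‖ ^ 2 ∂(μ.prod μ') ≤
      (1 + min ((n : ℝ) / s ^ 2) (Real.sqrt n / s)) * B) := by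

  classical
  set G := gradient f x with hG
  set m := min ((n : ℝ) / s ^ 2) (Real.sqrt n / s) with hm
  have hm0 : 0 ≤ m := le_min (by positivity) (by positivity)
  -- pointwise-in-ω facts
  have key : ∀ ω : Ω,
      Integrable (fun ω' => Q (g ω) ω') μ' ∧
      (∀ᵐ ω' ∂μ', ‖Q (g ω) ω'‖ ≤ Real.sqrt n * ‖g ω‖) ∧
      (∫ ω', Q (g ω) ω' ∂μ' = g ω) ∧
      (∫ ω', ‖Q (g ω) ω'‖ ^ 2 ∂μ' ≤ (1 + m) * ‖g ω‖ ^ 2) := by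
    intro ω
    by_cases hz : g ω = 0
    · have hzero : (fun ω' => Q (g ω) ω') = fun _ => (0 : EuclideanSpace ℝ (Fin n)) :=
        funext fun ω' => by rw [hz, hQzero]
      refine ⟨?_, ?_, ?_, ?_⟩
      · rw [hzero]; exact integrable_const _
      · filter_upwards with ω'
        rw [hz, hQzero]
        simp
      · simp [hz, hQzero]
      · simp [hz, hQzero]
    · obtain ⟨hQm, hbd, hQint, hmean, hsq⟩ := stochQuant_moments hs hz (hQdist _ hz)
      exact ⟨hQint, hbd, hmean, hsq⟩
  have hYsm : AEStronglyMeasurable (fun p : Ω × Ω' => Q (g p.1) p.2) (μ.prod μ') :=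
    hQmeas.aestronglyMeasurable
  -- a.e. bound on the product space
  have hSm : MeasurableSet {p : Ω × Ω' | ‖Q (g p.1) p.2‖ ≤ Real.sqrt n * ‖g p.1‖} :=
    measurableSet_le hQmeas.norm ((hgmeas.comp measurable_fst).norm.const_mul _)
  have haeprod : ∀ᵐ p ∂(μ.prod μ'), ‖Q (g p.1) p.2‖ ≤ Real.sqrt n * ‖g p.1‖ := by
    rw [ae_iff]
    have heq : {p : Ω × Ω' | ¬ ‖Q (g p.1) p.2‖ ≤ Real.sqrt n * ‖g p.1‖}
        = {p : Ω × Ω' | ‖Q (g p.1) p.2‖ ≤ Real.sqrt n * ‖g p.1‖}ᶜ := rfl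
    rw [heq, Measure.prod_apply hSm.compl]
    have hz2 : ∀ ω : Ω, μ' {a : Ω' | ‖Q (g ω) a‖ ≤ Real.sqrt n * ‖g ω‖}ᶜ = 0 := by
      intro ω
      rw [Set.compl_setOf]
      have h3 := (key ω).2.1
      rw [ae_iff] at h3
      exact h3
    simp [hz2]
  -- integrability of g and ‖g‖²
  have hgint : Integrable g μ := hgL2.integrable one_le_two
  have hgsq : Integrable (fun ω => ‖g ω‖ ^ 2) μ := by
    have h2 := hgL2.integrable_norm_rpow two_ne_zero ENNReal.ofNat_ne_top
    refine (integrable_congr (Filter.Eventually.of_forall fun ω => ?_)).1 h2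
    rw [ENNReal.toReal_ofNat, show ((2 : ℝ)) = ((2 : ℕ) : ℝ) by norm_num,
      Real.rpow_natCast]
  -- integrability of Q(g) on the product space
  have hYint : Integrable (fun p : Ω × Ω' => Q (g p.1) p.2) (μ.prod μ') := by
    rw [integrable_prod_iff hYsm]
    constructor
    · exact Filter.Eventually.of_forall fun ω => (key ω).1
    · refine Integrable.mono' (hgint.norm.const_mul (Real.sqrt n))
        hYsm.norm.integral_prod_right' ?_
      refine Filter.Eventually.of_forall fun ω => ?_
      have h0 : 0 ≤ ∫ ω', ‖Q (g ω) ω'‖ ∂μ' := integral_nonneg fun _ => norm_nonneg _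
      rw [Real.norm_of_nonneg h0]
      calc ∫ ω', ‖Q (g ω) ω'‖ ∂μ'
          ≤ ∫ _ω' : Ω', Real.sqrt n * ‖g ω‖ ∂μ' :=
            integral_mono_of_nonneg (Filter.Eventually.of_forall fun _ => norm_nonneg _)
              (integrable_const _) ((key ω).2.1)
        _ = Real.sqrt n * ‖g ω‖ := by simp
  -- the mean
  have hmean : ∫ p, Q (g p.1) p.2 ∂(μ.prod μ') = G := by
    rw [integral_prod _ hYint]
    calc ∫ ω, ∫ ω', Q (g ω) ω' ∂μ' ∂μ = ∫ ω, g ω ∂μ :=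
          integral_congr_ae (Filter.Eventually.of_forall fun ω => (key ω).2.2.1)
      _ = G := hgmean
  -- integrability of the squared norm on the product space
  have hgsqfst : Integrable (fun p : Ω × Ω' => (n : ℝ) * ‖g p.1‖ ^ 2) (μ.prod μ') := by
    have hsm : AEStronglyMeasurable (fun p : Ω × Ω' => (n : ℝ) * ‖g p.1‖ ^ 2)
        (μ.prod μ') :=
      (((hgmeas.comp measurable_fst).norm.pow_const 2).const_mul _).aestronglyMeasurable
    rw [integrable_prod_iff hsm]
    refine ⟨Filter.Eventually.of_forall fun ω =>
      (show Integrable (fun _ : Ω' => (n : ℝ) * ‖g ω‖ ^ 2) μ' from integrable_const _), ?_⟩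
    have heq : (fun x : Ω => ∫ _y : Ω', ‖(n : ℝ) * ‖g x‖ ^ 2‖ ∂μ')
        = fun x => (n : ℝ) * ‖g x‖ ^ 2 := by
      funext x
      rw [integral_const]
      simp [Real.norm_of_nonneg (by positivity : (0 : ℝ) ≤ (n : ℝ) * ‖g x‖ ^ 2)]
    show Integrable (fun x : Ω => ∫ _y : Ω', ‖(n : ℝ) * ‖g x‖ ^ 2‖ ∂μ') μ
    rw [heq]
    exact hgsq.const_mul _
  have hYsq : Integrable (fun p : Ω × Ω' => ‖Q (g p.1) p.2‖ ^ 2) (μ.prod μ') := by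
    refine Integrable.mono' hgsqfst (hQmeas.norm.pow_const 2).aestronglyMeasurable ?_
    filter_upwards [haeprod] with p hp
    rw [Real.norm_of_nonneg (sq_nonneg _)]
    calc ‖Q (g p.1) p.2‖ ^ 2 ≤ (Real.sqrt n * ‖g p.1‖) ^ 2 :=
          pow_le_pow_left₀ (norm_nonneg _) hp 2
      _ = (n : ℝ) * ‖g p.1‖ ^ 2 := by rw [mul_pow, Real.sq_sqrt (Nat.cast_nonneg n)]
  -- the second moment bound
  have hsqint_le : ∫ p, ‖Q (g p.1) p.2‖ ^ 2 ∂(μ.prod μ') ≤ (1 + m) * B := by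
    rw [integral_prod _ hYsq]
    calc ∫ ω, ∫ ω', ‖Q (g ω) ω'‖ ^ 2 ∂μ' ∂μ
        ≤ ∫ ω, (1 + m) * ‖g ω‖ ^ 2 ∂μ :=
          integral_mono_of_nonneg
            (Filter.Eventually.of_forall fun ω => integral_nonneg fun _ => sq_nonneg _)
            (hgsq.const_mul _)
            (Filter.Eventually.of_forall fun ω => (key ω).2.2.2)
      _ = (1 + m) * ∫ ω, ‖g ω‖ ^ 2 ∂μ := integral_const_mul _ _
      _ ≤ (1 + m) * B := mul_le_mul_of_nonneg_left hgmom (by linarith)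
  refine ⟨hmean, ?_⟩
  -- expand the square
  have hinner_int : Integrable (fun p : Ω × Ω' =>
      (inner ℝ G (Q (g p.1) p.2) : ℝ)) (μ.prod μ') := by
    have := (innerSL ℝ G).integrable_comp hYint
    simpa using this
  have hinner_val : ∫ p, (inner ℝ G (Q (g p.1) p.2) : ℝ) ∂(μ.prod μ') = ‖G‖ ^ 2 := by
    have h1 := (innerSL ℝ G).integral_comp_comm hYint
    simp only [innerSL_apply_apply] at h1
    rw [h1, hmean, real_inner_self_eq_norm_sq]
  have hexp : ∫ p, ‖Q (g p.1) p.2 - G‖ ^ 2 ∂(μ.prod μ')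
      = ∫ p, ‖Q (g p.1) p.2‖ ^ 2 ∂(μ.prod μ') - 2 * ‖G‖ ^ 2 + ‖G‖ ^ 2 := by
    have hptw : ∀ p : Ω × Ω', ‖Q (g p.1) p.2 - G‖ ^ 2
        = ‖Q (g p.1) p.2‖ ^ 2 - 2 * (inner ℝ G (Q (g p.1) p.2) : ℝ) + ‖G‖ ^ 2 := by
      intro p
      rw [norm_sub_sq_real, real_inner_comm]
    simp only [hptw]
    have hmul : Integrable (fun p : Ω × Ω' =>
        2 * (inner ℝ G (Q (g p.1) p.2) : ℝ)) (μ.prod μ') := hinner_int.const_mul 2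
    have hsub : Integrable (fun p : Ω × Ω' =>
        ‖Q (g p.1) p.2‖ ^ 2 - 2 * (inner ℝ G (Q (g p.1) p.2) : ℝ)) (μ.prod μ') :=
      hYsq.sub hmul
    rw [integral_add hsub (integrable_const _), integral_sub hYsq hmul,
      integral_const_mul, hinner_val, integral_const]
    simp
  rw [hexp]
  nlinarith [hsqint_le, sq_nonneg ‖G‖]
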